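/- Let B be a braided category, (M, Φ) a B-module category, E a braided B-module structure on (M, Φ), A a monoid object in B, and (M, ρ) an A-module in M. Then ρ̂ := ρ ∘ E_{A,M} : A·M → M is again an A-module structure on M. If moreover ς is a stable structure for E, then ς_M is an isomorphism of A-modules from (M, ρ) to (M, ρ̂), i.e. ς_M ∘ ρ = ρ̂ ∘ Φ(A)(ς_M). -/

import Mathlib

open CategoryTheory MonoidalCategory

universe v u v₂ u₂

variable {𝓑 : Type u} [Category.{v} 𝓑] [MonoidalCategory 𝓑] [BraidedCategory 𝓑]
variable {𝓜 : Type u₂} [Category.{v₂} 𝓜]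

/-- A (left) module category over a monoidal category `𝓑`, presented as data: an action
bifunctor together with coherent unit and associativity structure isomorphisms. -/
structure ModuleCategoryStruct (𝓑 : Type u) (𝓜 : Type u₂) [Category.{v} 𝓑]
    [MonoidalCategory 𝓑] [Category.{v₂} 𝓜] where
  act : 𝓑 ⥤ 𝓜 ⥤ 𝓜
  unitIso : act.obj (𝟙_ 𝓑) ≅ 𝟭 𝓜
  assocIso : ∀ X Y : 𝓑, act.obj (X ⊗ Y) ≅ act.obj Y ⋙ act.obj X
  assoc_natural : ∀ {X X' Y Y' : 𝓑} (f : X ⟶ X') (g : Y ⟶ Y'),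
    act.map (f ⊗ₘ g) ≫ (assocIso X' Y').hom =
      (assocIso X Y).hom ≫ CategoryTheory.Functor.whiskerRight (act.map g) (act.obj X) ≫
        CategoryTheory.Functor.whiskerLeft (act.obj Y') (act.map f)
  pentagon : ∀ X Y Z : 𝓑,
    (assocIso (X ⊗ Y) Z).hom ≫ CategoryTheory.Functor.whiskerLeft (act.obj Z) (assocIso X Y).hom =
      act.map (α_ X Y Z).hom ≫ (assocIso X (Y ⊗ Z)).hom ≫
        CategoryTheory.Functor.whiskerRight (assocIso Y Z).hom (act.obj X)
  triangle_right : ∀ X : 𝓑,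
    act.map (ρ_ X).hom =
      (assocIso X (𝟙_ 𝓑)).hom ≫ CategoryTheory.Functor.whiskerRight unitIso.hom (act.obj X)
  triangle_left : ∀ X : 𝓑,
    act.map (λ_ X).hom =
      (assocIso (𝟙_ 𝓑) X).hom ≫ CategoryTheory.Functor.whiskerLeft (act.obj X) unitIso.hom

namespace ModuleCategoryStruct

variable (D : ModuleCategoryStruct 𝓑 𝓜)

/-- Notation helper: the action of `X : 𝓑` on `m : 𝓜`. -/
def smul (X : 𝓑) (m : 𝓜) : 𝓜 := (D.act.obj X).obj m

/-- A braided `𝓑`-module structure on a module category `(𝓜, Φ)`: a family of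
isomorphisms `E_{X,m} : X·m ⟶ X·m`, natural in `X` and `m`, satisfying (C1) and (C2). -/
structure BraidedModuleStructure where
  E : ∀ (X : 𝓑) (m : 𝓜), D.smul X m ⟶ D.smul X m
  iso : ∀ (X : 𝓑) (m : 𝓜), IsIso (E X m)
  nat_left : ∀ {X X' : 𝓑} (f : X ⟶ X') (m : 𝓜),
    (D.act.map f).app m ≫ E X' m = E X m ≫ (D.act.map f).app m
  nat_right : ∀ (X : 𝓑) {m m' : 𝓜} (g : m ⟶ m'),
    (D.act.obj X).map g ≫ E X m' = E X m ≫ (D.act.obj X).map g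
  C1 : ∀ (X Y : 𝓑) (m : 𝓜),
    E Y (D.smul X m) =
      (D.assocIso Y X).inv.app m ≫ (D.act.map (β_ X Y).inv).app m ≫
        (D.assocIso X Y).hom.app m ≫ (D.act.obj X).map (E Y m) ≫
        (D.assocIso X Y).inv.app m ≫ (D.act.map (β_ Y X).inv).app m ≫
        (D.assocIso Y X).hom.app m
  C2 : ∀ (X Y : 𝓑) (m : 𝓜),
    E (Y ⊗ X) m =
      (D.assocIso Y X).hom.app m ≫ (D.act.obj Y).map (E X m) ≫ E Y (D.smul X m) ≫
        (D.assocIso Y X).inv.app m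

/-- A stable structure on a braided `𝓑`-module: a natural automorphism `ς` of the
identity functor of `𝓜` with `E_{X,m} = ς_{X·m} ∘ Φ(X)(ς_m)⁻¹`. -/
structure StableStructure (Eb : D.BraidedModuleStructure) where
  ς : ∀ m : 𝓜, m ≅ m
  natural : ∀ {m m' : 𝓜} (g : m ⟶ m'), (ς m).hom ≫ g = g ≫ (ς m').hom
  stability : ∀ (X : 𝓑) (m : 𝓜),
    Eb.E X m = (D.act.obj X).map (ς m).inv ≫ (ς (D.smul X m)).hom

/-- An `A`-module in `𝓜`, for a monoid object `A` in `𝓑`: an object `m` with a unital,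
associative action `ρ : A·m ⟶ m`. -/
structure IsModuleObject (A : Mon 𝓑) (m : 𝓜) (ρ : D.smul A.X m ⟶ m) : Prop where
  unital : (D.act.map (MonObj.one : 𝟙_ 𝓑 ⟶ A.X)).app m ≫ ρ = D.unitIso.hom.app m
  assoc : (D.assocIso A.X A.X).hom.app m ≫ (D.act.obj A.X).map ρ ≫ ρ =
    (D.act.map (MonObj.mul : A.X ⊗ A.X ⟶ A.X)).app m ≫ ρ

end ModuleCategoryStruct

open ModuleCategoryStruct

lemma E_unit (D : ModuleCategoryStruct 𝓑 𝓜) (Eb : D.BraidedModuleStructure) (m : 𝓜) :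
    Eb.E (𝟙_ 𝓑) m = 𝟙 _ := by
  haveI := Eb.iso
  -- First: E at the object 𝟙·m is the identity.
  have key : Eb.E (𝟙_ 𝓑) (D.smul (𝟙_ 𝓑) m) = 𝟙 _ := by
    have happ : (D.act.map (λ_ (𝟙_ 𝓑)).hom).app m =
        (D.assocIso (𝟙_ 𝓑) (𝟙_ 𝓑)).hom.app m ≫ D.unitIso.hom.app (D.smul (𝟙_ 𝓑) m) := by
      have h := congrArg (fun t => t.app m) (D.triangle_left (𝟙_ 𝓑)); simp at h; exact h
    have h1 := Eb.nat_left (λ_ (𝟙_ 𝓑)).hom m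
    rw [Eb.C2, happ] at h1
    have h1' : (D.act.obj (𝟙_ 𝓑)).map (Eb.E (𝟙_ 𝓑) m) ≫
        Eb.E (𝟙_ 𝓑) (D.smul (𝟙_ 𝓑) m) ≫ D.unitIso.hom.app (D.smul (𝟙_ 𝓑) m) =
        D.unitIso.hom.app (D.smul (𝟙_ 𝓑) m) ≫ Eb.E (𝟙_ 𝓑) m := by
      erw [← cancel_epi ((D.assocIso (𝟙_ 𝓑) (𝟙_ 𝓑)).hom.app m)]
      have h := h1.symm
      erw [Category.assoc, Category.assoc, Category.assoc, Iso.inv_hom_id_app_assoc, Category.assoc] at h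
      exact h
    have hnat : (D.act.obj (𝟙_ 𝓑)).map (Eb.E (𝟙_ 𝓑) m) ≫
        D.unitIso.hom.app (D.smul (𝟙_ 𝓑) m) =
        D.unitIso.hom.app (D.smul (𝟙_ 𝓑) m) ≫ Eb.E (𝟙_ 𝓑) m := by
      simpa using D.unitIso.hom.naturality (Eb.E (𝟙_ 𝓑) m)
    rw [← hnat] at h1'
    have h2 : Eb.E (𝟙_ 𝓑) (D.smul (𝟙_ 𝓑) m) ≫ D.unitIso.hom.app (D.smul (𝟙_ 𝓑) m) =
        𝟙 _ ≫ D.unitIso.hom.app (D.smul (𝟙_ 𝓑) m) := by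
      rw [Category.id_comp]
      exact (cancel_epi ((D.act.obj (𝟙_ 𝓑)).map (Eb.E (𝟙_ 𝓑) m))).mp h1'
    exact (cancel_mono (D.unitIso.hom.app (D.smul (𝟙_ 𝓑) m))).mp h2
  have h3 := Eb.nat_right (𝟙_ 𝓑) (D.unitIso.hom.app m)
  dsimp [ModuleCategoryStruct.smul] at key h3
  rw [key, Category.id_comp] at h3
  have h4 : (D.act.obj (𝟙_ 𝓑)).map (D.unitIso.hom.app m) ≫ Eb.E (𝟙_ 𝓑) m =
      (D.act.obj (𝟙_ 𝓑)).map (D.unitIso.hom.app m) ≫ 𝟙 _ := by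
    rw [Category.comp_id]; exact h3
  exact (cancel_epi ((D.act.obj (𝟙_ 𝓑)).map (D.unitIso.hom.app m))).mp h4

theorem twisted_action_isModuleObject_and_stable_iso
    (D : ModuleCategoryStruct 𝓑 𝓜) (Eb : D.BraidedModuleStructure)
    (A : Mon 𝓑) (m : 𝓜) (ρ : D.smul A.X m ⟶ m) (hρ : D.IsModuleObject A m ρ) :
    D.IsModuleObject A m (Eb.E A.X m ≫ ρ) ∧
    (∀ ς : D.StableStructure Eb,
      ρ ≫ (ς.ς m).hom =
        (D.act.obj A.X).map (ς.ς m).hom ≫ (Eb.E A.X m ≫ ρ)) := by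
  haveI := Eb.iso
  constructor
  · constructor
    · erw [← Category.assoc, Eb.nat_left (MonObj.one : 𝟙_ 𝓑 ⟶ A.X) m, E_unit, Category.id_comp, hρ.unital]
    · have hC2 : (D.assocIso A.X A.X).hom.app m ≫ (D.act.obj A.X).map (Eb.E A.X m) ≫
          Eb.E A.X (D.smul A.X m) = Eb.E (A.X ⊗ A.X) m ≫ (D.assocIso A.X A.X).hom.app m := by
        rw [Eb.C2]; simp [ModuleCategoryStruct.smul, Category.assoc]
        erw [Category.assoc, Iso.inv_hom_id_app, Category.comp_id]
      calc (D.assocIso A.X A.X).hom.app m ≫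
            (D.act.obj A.X).map (Eb.E A.X m ≫ ρ) ≫ Eb.E A.X m ≫ ρ
          = (D.assocIso A.X A.X).hom.app m ≫ (D.act.obj A.X).map (Eb.E A.X m) ≫
            ((D.act.obj A.X).map ρ ≫ Eb.E A.X m) ≫ ρ := by
            simp [Functor.map_comp, ModuleCategoryStruct.smul, Category.assoc]
            erw [Functor.map_comp, Category.assoc, Category.assoc]
        _ = (D.assocIso A.X A.X).hom.app m ≫ (D.act.obj A.X).map (Eb.E A.X m) ≫
            (Eb.E A.X (D.smul A.X m) ≫ (D.act.obj A.X).map ρ) ≫ ρ := by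
            rw [Eb.nat_right A.X ρ]; rfl
        _ = ((Eb.E (A.X ⊗ A.X) m ≫ (D.assocIso A.X A.X).hom.app m) ≫
            (D.act.obj A.X).map ρ ≫ ρ : (D.act.obj (A.X ⊗ A.X)).obj m ⟶ m) := by
            erw [← hC2]; simp [ModuleCategoryStruct.smul, Category.assoc]
            erw [Category.assoc, Category.assoc]
        _ = (Eb.E (A.X ⊗ A.X) m ≫ (D.act.map (MonObj.mul : A.X ⊗ A.X ⟶ A.X)).app m ≫ ρ : (D.act.obj (A.X ⊗ A.X)).obj m ⟶ m) := by
            erw [Category.assoc, hρ.assoc]; rfl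
        _ = (D.act.map (MonObj.mul : A.X ⊗ A.X ⟶ A.X)).app m ≫ Eb.E A.X m ≫ ρ := by
            erw [← Category.assoc, ← Eb.nat_left (MonObj.mul : A.X ⊗ A.X ⟶ A.X) m, Category.assoc]; rfl
  · intro ς
    rw [ς.stability]
    have : (D.act.obj A.X).map (ς.ς m).hom ≫ (D.act.obj A.X).map (ς.ς m).inv = 𝟙 _ := by
      rw [← Functor.map_comp, Iso.hom_inv_id, CategoryTheory.Functor.map_id]
    calc ρ ≫ (ς.ς m).hom = (ς.ς (D.smul A.X m)).hom ≫ ρ := (ς.natural ρ).symm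
      _ = ((D.act.obj A.X).map (ς.ς m).hom ≫
          ((D.act.obj A.X).map (ς.ς m).inv ≫ (ς.ς (D.smul A.X m)).hom) ≫ ρ : D.smul A.X m ⟶ m) := by
          erw [← Category.assoc, ← Category.assoc, this, Category.id_comp]
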